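/- Let σ_1, …, σ_n be nonnegative reals and let ω_{t,i} (1 ≤ t ≤ n, 1 ≤ i ≤ k) be i.i.d. standard Gaussian N(0,1) random variables. Fix strictly increasing p-tuples (i_1 < … < i_p) and (j_1 < … < j_p) in {1, …, k} and indices t_1, …, t_p, s_1, …, s_p in {1, …, n}, and set Y = ∏_{h=1}^{p} σ_{t_h}² ω_{t_h,i_h} ω_{t_h,i_{h+1}} σ_{s_h}² ω_{s_h,j_h} ω_{s_h,j_{h+1}} (with i_{p+1} ≡ i_1, j_{p+1} ≡ j_1, t_0 ≡ t_p, s_0 ≡ s_p). If for some h ∈ {1, …, p} the index i_h does not occur among {j_1, …, j_p} (i.e., i_h is a non-repeated index) and t_{h−1} ≠ t_h, then E[Y] = 0. Likewise, if j_h does not occur among {i_1, …, i_p} and s_{h−1} ≠ s_h, then E[Y] = 0. -/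

import Mathlib

open MeasureTheory ProbabilityTheory

/-- The random variable `Y_{i_1,…,j_p}^{t_1,…,s_p}` from the paper:
`Y = ∏_{h=1}^{p} σ_{t_h}² ω_{t_h,i_h} ω_{t_h,i_{h+1}} σ_{s_h}² ω_{s_h,j_h} ω_{s_h,j_{h+1}}`,
with the cyclic conventions `i_{p+1} ≡ i_1` and `j_{p+1} ≡ j_1`. -/
noncomputable def yTerm {n k p : ℕ} [NeZero p] (σ : Fin n → ℝ) {Ω : Type}
    (ω : Fin n → Fin k → Ω → ℝ) (i j : Fin p → Fin k) (t s : Fin p → Fin n)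
    (x : Ω) : ℝ :=
  ∏ h : Fin p,
    (σ (t h) ^ 2 * ω (t h) (i h) x * ω (t h) (i (h + 1)) x *
      σ (s h) ^ 2 * ω (s h) (j h) x * ω (s h) (j (h + 1)) x)

/-- The mean of a standard Gaussian is zero (by symmetry, no integrability needed). -/
lemma gauss_mean_zero : ∫ y, y ∂(gaussianReal 0 1) = 0 := by
  have hmap : Measure.map (fun y => (-1 : ℝ) * y) (gaussianReal 0 1) = gaussianReal 0 1 := by
    have := gaussianReal_map_const_mul (μ := 0) (v := 1) (-1)
    simpa using this
  have h1 := integral_map (μ := gaussianReal 0 1) (φ := fun y => (-1 : ℝ) * y)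
    (f := fun y => y) (by fun_prop) aestronglyMeasurable_id
  rw [hmap] at h1
  have h2 : ∫ y : ℝ, -y ∂(gaussianReal 0 1) = -∫ y : ℝ, y ∂(gaussianReal 0 1) :=
    integral_neg (fun y : ℝ => y)
  simp only [neg_one_mul] at h1
  rw [h2] at h1
  linarith

/-- Key lemma: one-sided version of Statement 8. -/
lemma key_lemma {n k p : ℕ} [NeZero p] (σ : Fin n → ℝ)
    {Ω : Type} [MeasureSpace Ω] [IsProbabilityMeasure (ℙ : Measure Ω)]
    (ω : Fin n → Fin k → Ω → ℝ)
    (hmeas : ∀ a b, Measurable (ω a b))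
    (hgauss : ∀ a b, Measure.map (ω a b) ℙ = gaussianReal 0 1)
    (hindep : iIndepFun
      (fun ab : Fin n × Fin k => ω ab.1 ab.2) ℙ)
    (i j : Fin p → Fin k) (hi : Function.Injective i)
    (t s : Fin p → Fin n)
    (h₀ : Fin p) (hni : ∀ a : Fin p, i h₀ ≠ j a) (ht : t (h₀ - 1) ≠ t h₀) :
    ∫ x, yTerm σ ω i j t s x ∂ℙ = 0 := by
  classical
  set e : Fin n × Fin k := (t h₀, i h₀) with he
  set f : Fin p × Fin 4 → Fin n × Fin k := fun a =>
    ![(t a.1, i a.1), (t a.1, i (a.1 + 1)), (s a.1, j a.1), (s a.1, j (a.1 + 1))] a.2 with hf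
  set C : ℝ := ∏ m : Fin p, σ (t m) ^ 2 * σ (s m) ^ 2 with hC
  set E : Finset (Fin p × Fin 4) := Finset.univ.erase (h₀, (0 : Fin 4)) with hE
  -- rewrite yTerm as a product over pairs
  have hY : ∀ x, yTerm σ ω i j t s x
      = C * ∏ a : Fin p × Fin 4, ω (f a).1 (f a).2 x := by
    intro x
    rw [hC, Fintype.prod_prod_type, ← Finset.prod_mul_distrib]
    refine Finset.prod_congr rfl fun m _ => ?_
    rw [Fin.prod_univ_four]
    simp only [hf, Matrix.cons_val_zero, Matrix.cons_val_one, Matrix.head_cons,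
      Matrix.cons_val_two, Matrix.tail_cons, Matrix.cons_val_three, Matrix.head_fin_const]
    ring
  set g : Ω → ℝ := fun x => C * ∏ a ∈ E, ω (f a).1 (f a).2 x with hg
  have hfe0 : f (h₀, (0 : Fin 4)) = e := by simp [hf, he]
  -- split off the distinguished factor
  have hsplit : ∀ x, yTerm σ ω i j t s x = ω e.1 e.2 x * g x := by
    intro x
    rw [hY x, ← Finset.mul_prod_erase Finset.univ _ (Finset.mem_univ (h₀, (0 : Fin 4))),
      hfe0, hg, hE]
    ring
  -- all other pairs differ from e
  have hne : ∀ a ∈ E, f a ≠ e := by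
    rintro ⟨m, c⟩ ha hcon
    rw [hE, Finset.mem_erase] at ha
    fin_cases c
    · simp [hf, he, Prod.ext_iff] at hcon
      exact ha.1 (by simp [hi hcon.2])
    · simp [hf, he, Prod.ext_iff] at hcon
      have hm : m = h₀ - 1 := eq_sub_of_add_eq (hi hcon.2)
      exact ht (hm ▸ hcon.1)
    · simp [hf, he, Prod.ext_iff] at hcon
      exact hni m hcon.2.symm
    · simp [hf, he, Prod.ext_iff] at hcon
      exact hni (m + 1) hcon.2.symm
  -- independence of ω e and g
  have gmeas : Measurable g := by
    refine measurable_const.mul ?_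
    exact Finset.measurable_prod _ fun a _ => hmeas _ _
  have hT : ∀ a : {x // x ∈ E}, f a.1 ∈ ({e} : Finset (Fin n × Fin k))ᶜ := by
    intro a
    simp only [Finset.mem_compl, Finset.mem_singleton]
    exact hne a.1 a.2
  have hIndep2 : IndepFun (ω e.1 e.2) g ℙ := by
    have hST : Disjoint ({e} : Finset (Fin n × Fin k)) ({e} : Finset (Fin n × Fin k))ᶜ :=
      disjoint_compl_right
    have hIF := hindep.indepFun_finset {e} ({e} : Finset (Fin n × Fin k))ᶜ hST
      (fun ab => hmeas ab.1 ab.2)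
    set φ : ({x // x ∈ ({e} : Finset (Fin n × Fin k))} → ℝ) → ℝ :=
      fun v => v ⟨e, Finset.mem_singleton_self e⟩ with hφ
    set ψ : ({x // x ∈ ({e} : Finset (Fin n × Fin k))ᶜ} → ℝ) → ℝ :=
      fun v => C * ∏ a ∈ E.attach, v ⟨f a.1, hT a⟩ with hψ
    have φm : Measurable φ := measurable_pi_apply _
    have ψm : Measurable ψ :=
      measurable_const.mul (Finset.measurable_prod _ fun a _ => measurable_pi_apply _)
    have h := hIF.comp φm ψm
    have e1 : (φ ∘ fun a (x : {x // x ∈ ({e} : Finset (Fin n × Fin k))}) =>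
        ω (x : Fin n × Fin k).1 (x : Fin n × Fin k).2 a) = ω e.1 e.2 := rfl
    have e2 : (ψ ∘ fun a (x : {x // x ∈ ({e} : Finset (Fin n × Fin k))ᶜ}) =>
        ω (x : Fin n × Fin k).1 (x : Fin n × Fin k).2 a) = g := by
      funext x
      simp only [Function.comp_apply, hψ, hg]
      rw [Finset.prod_attach E (fun a => ω (f a).1 (f a).2 x)]
    rw [e1, e2] at h
    exact h
  -- conclude
  have hmean : ∫ x, ω e.1 e.2 x ∂ℙ = 0 := by
    have h := integral_map (μ := (ℙ : Measure Ω)) (φ := ω e.1 e.2) (f := fun y : ℝ => y)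
      (hmeas e.1 e.2).aemeasurable aestronglyMeasurable_id
    rw [hgauss] at h
    rw [← h]
    exact gauss_mean_zero
  calc ∫ x, yTerm σ ω i j t s x ∂ℙ = ∫ x, ω e.1 e.2 x * g x ∂ℙ := by
        exact integral_congr_ae (Filter.Eventually.of_forall hsplit)
    _ = (∫ x, ω e.1 e.2 x ∂ℙ) * ∫ x, g x ∂ℙ :=
        hIndep2.integral_fun_mul_eq_mul_integral (hmeas e.1 e.2).aestronglyMeasurable gmeas.aestronglyMeasurable
    _ = 0 := by rw [hmean, zero_mul]

/-- If some `i_h` is a non-repeated index (it occurs among none of the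
`j`'s) and `t_{h-1} ≠ t_h` (cyclically, `t_0 ≡ t_p`), then `E[Y] = 0`; likewise with the
roles of `i, t` and `j, s` exchanged. -/
theorem stmt8 {n k p : ℕ} [NeZero p] (σ : Fin n → ℝ) (hσ : ∀ a, 0 ≤ σ a)
    {Ω : Type} [MeasureSpace Ω] [IsProbabilityMeasure (ℙ : Measure Ω)]
    (ω : Fin n → Fin k → Ω → ℝ)
    (hmeas : ∀ a b, Measurable (ω a b))
    (hgauss : ∀ a b, Measure.map (ω a b) ℙ = gaussianReal 0 1)
    (hindep : iIndepFun
      (fun ab : Fin n × Fin k => ω ab.1 ab.2) ℙ)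
    (i j : Fin p → Fin k) (hi : StrictMono i) (hj : StrictMono j)
    (t s : Fin p → Fin n)
    (hodd : (∃ h : Fin p, (∀ a : Fin p, i h ≠ j a) ∧ t (h - 1) ≠ t h) ∨
      (∃ h : Fin p, (∀ a : Fin p, j h ≠ i a) ∧ s (h - 1) ≠ s h)) :
    ∫ x, yTerm σ ω i j t s x ∂ℙ = 0 := by
  rcases hodd with ⟨h₀, hni, ht⟩ | ⟨h₀, hni, hs⟩
  · exact key_lemma σ ω hmeas hgauss hindep i j hi.injective t s h₀ hni ht
  · have hswap : ∀ x, yTerm σ ω i j t s x = yTerm σ ω j i s t x := by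
      intro x
      unfold yTerm
      exact Finset.prod_congr rfl fun h _ => by ring
    rw [integral_congr_ae (Filter.Eventually.of_forall hswap)]
    exact key_lemma σ ω hmeas hgauss hindep j i hj.injective s t h₀ hni hs
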